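/- For the extrusion operator E_v on pointed k-chains, defined by E_v Σ(p_i;α_i) = Σ(p_i; v ∧ α_i), the bound ‖E_v(A)‖_{B^r} ≤ ‖v‖·‖A‖_{B^r} holds for every pointed k-chain A, every v ∈ ℝⁿ, and every r ≥ 0. -/
import Mathlib


/-! Pointed chains: finitely supported functions from points of `E` to "k-vectors" in `V`,
difference chains, and the `B^r` norms of J. Harrison's theory of differential chains. -/

open Finsupp

variable {E V : Type*} [NormedAddCommGroup E] [NormedSpace ℝ E]
  [NormedAddCommGroup V] [NormedSpace ℝ V]

/-- The difference chain `Δ^j_U (p; α)`, for a list `U = [u₁,…,u_j]` of vectors. -/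
noncomputable def diffChain : List E → E → V → (E →₀ V)
  | [], p, α => Finsupp.single p α
  | u :: U, p, α => Finsupp.mapDomain (· + u) (diffChain U p α) - diffChain U p α

/-- The weight `|Δ^j_U(p;α)|_j := ‖u₁‖⋯‖u_j‖‖α‖` of a difference chain. -/
noncomputable def dweight (U : List E) (α : V) : ℝ := (U.map fun u => ‖u‖).prod * ‖α‖

/-- The `r`-norm `‖A‖_{B^r}` on pointed chains: the infimum of `Σᵢ |Δ^{jᵢ}_{Uᵢ}(pᵢ;αᵢ)|_{jᵢ}`
over all decompositions `A = Σᵢ Δ^{jᵢ}_{Uᵢ}(pᵢ;αᵢ)` with all `jᵢ ≤ r`. -/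
noncomputable def Bnorm (r : ℕ) (A : E →₀ V) : ℝ :=
  sInf {s : ℝ | ∃ L : List (List E × E × V),
    (∀ t ∈ L, t.1.length ≤ r) ∧
    A = (L.map fun t => diffChain t.1 t.2.1 t.2.2).sum ∧
    s = (L.map fun t => dweight t.1 t.2.2).sum}

/-- `mapRange` by a linear map commutes with `diffChain`. -/
lemma mapRange_diffChain {V' : Type*} [NormedAddCommGroup V'] [NormedSpace ℝ V']
    (f : V →ₗ[ℝ] V') (U : List E) (p : E) (α : V) :
    Finsupp.mapRange f (map_zero f) (diffChain U p α) = diffChain U p (f α) := by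
  induction U with
  | nil => simp [diffChain]
  | cons u U ih =>
    simp only [diffChain]
    rw [show (Finsupp.mapRange f (map_zero f) : (E →₀ V) → (E →₀ V')) =
      (Finsupp.mapRange.addMonoidHom f.toAddMonoidHom : (E →₀ V) →+ (E →₀ V')) from rfl,
      map_sub]
    simp only [Finsupp.mapRange.addMonoidHom_apply, LinearMap.toAddMonoidHom_coe]
    rw [← Finsupp.mapDomain_mapRange _ _ _ _ (map_add f), ih]

lemma dweight_nonneg (U : List E) (α : V) : 0 ≤ dweight U α := by
  apply mul_nonneg _ (norm_nonneg _)
  exact List.prod_nonneg (by simp +contextual [norm_nonneg])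

/-- Every value in the defining set of `Bnorm` is nonnegative. -/
lemma Bnorm_set_nonneg {r : ℕ} {A : E →₀ V} :
    ∀ s ∈ {s : ℝ | ∃ L : List (List E × E × V),
      (∀ t ∈ L, t.1.length ≤ r) ∧
      A = (L.map fun t => diffChain t.1 t.2.1 t.2.2).sum ∧
      s = (L.map fun t => dweight t.1 t.2.2).sum}, 0 ≤ s := by
  rintro s ⟨L, -, -, rfl⟩
  apply List.sum_nonneg
  simp only [List.mem_map]
  rintro x ⟨t, -, rfl⟩
  exact dweight_nonneg _ _

/-- Extrusion `E_v` (wedging each `k`-vector with the constant vector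
field `v`, here an arbitrary bilinear wedge satisfying the mass bound
`‖v ∧ α‖ ≤ ‖v‖‖α‖`) satisfies `‖E_v(A)‖_{B^r} ≤ ‖v‖·‖A‖_{B^r}` for every pointed chain
`A`, every `v`, and every `r ≥ 0`. -/
theorem extrusion_bound {V' : Type*} [NormedAddCommGroup V'] [NormedSpace ℝ V']
    (wedge : E →ₗ[ℝ] V →ₗ[ℝ] V')
    (hwedge : ∀ (v : E) (α : V), ‖wedge v α‖ ≤ ‖v‖ * ‖α‖)
    (v : E) (r : ℕ) (A : E →₀ V) :
    Bnorm r (Finsupp.mapRange (wedge v) (map_zero _) A) ≤ ‖v‖ * Bnorm r A := by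
  -- Main step: for every decomposition of `A` with weight `s`,
  -- `Bnorm r (E_v A) ≤ ‖v‖ * s`.
  have key : ∀ s ∈ {s : ℝ | ∃ L : List (List E × E × V),
      (∀ t ∈ L, t.1.length ≤ r) ∧
      A = (L.map fun t => diffChain t.1 t.2.1 t.2.2).sum ∧
      s = (L.map fun t => dweight t.1 t.2.2).sum},
      Bnorm r (Finsupp.mapRange (wedge v) (map_zero _) A) ≤ ‖v‖ * s := by
    rintro s ⟨L, hlen, hsum, rfl⟩
    have hL' : True := trivial
    have hmem : ((((L.map fun t => (t.1, t.2.1, wedge v t.2.2)).map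
        fun t : List E × E × V' => dweight t.1 t.2.2).sum : ℝ)) ∈
        {s : ℝ | ∃ L : List (List E × E × V'),
        (∀ t ∈ L, t.1.length ≤ r) ∧
        (Finsupp.mapRange (wedge v) (map_zero _) A) =
          (L.map fun t => diffChain t.1 t.2.1 t.2.2).sum ∧
        s = (L.map fun t => dweight t.1 t.2.2).sum} := by
      refine ⟨_, ?_, ?_, rfl⟩
      · simp only [List.mem_map]
        rintro t ⟨t', ht', rfl⟩
        exact hlen t' ht'
      · rw [hsum]
        rw [show (Finsupp.mapRange (wedge v) (map_zero _) : (E →₀ V) → (E →₀ V')) =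
          (Finsupp.mapRange.addMonoidHom (wedge v).toAddMonoidHom :
            (E →₀ V) →+ (E →₀ V')) from rfl, map_list_sum]
        simp only [List.map_map]
        refine congrArg List.sum (List.map_congr_left fun t _ => ?_)
        exact mapRange_diffChain (wedge v) t.1 t.2.1 t.2.2
    have h1 := csInf_le ⟨0, fun x hx => Bnorm_set_nonneg x hx⟩ hmem
    refine h1.trans ?_
    rw [← List.sum_map_mul_left]
    simp only [List.map_map]
    apply List.sum_le_sum
    intro t _
    simp only [Function.comp_apply, dweight]
    rw [mul_left_comm]
    exact mul_le_mul_of_nonneg_left (hwedge v t.2.2)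
      (List.prod_nonneg (by simp +contextual [norm_nonneg]))
  -- The defining set for `Bnorm r A` is nonempty.
  have hne : ∃ s, s ∈ {s : ℝ | ∃ L : List (List E × E × V),
      (∀ t ∈ L, t.1.length ≤ r) ∧
      A = (L.map fun t => diffChain t.1 t.2.1 t.2.2).sum ∧
      s = (L.map fun t => dweight t.1 t.2.2).sum} := by
    refine ⟨_, ⟨A.support.toList.map fun p => ([], p, A p), ?_, ?_, rfl⟩⟩
    · simp
    · simp only [List.map_map]
      rw [show ((fun t : List E × E × V => diffChain t.1 t.2.1 t.2.2) ∘
        fun p => (([] : List E), p, A p)) = fun p => Finsupp.single p (A p) from rfl]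
      rw [Finset.sum_map_toList]
      exact (Finsupp.sum_single A).symm
  rcases hne with ⟨s₀, hs₀⟩
  rcases eq_or_lt_of_le (norm_nonneg v) with hv | hv
  · -- ‖v‖ = 0, so v = 0 and the LHS is Bnorm of 0 ≤ 0.
    have := key s₀ hs₀
    rw [← hv] at this ⊢
    simpa using this
  · rw [← div_le_iff₀' hv]
    apply le_csInf ⟨s₀, hs₀⟩
    intro s hs
    rw [div_le_iff₀' hv]
    exact key s hs
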